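/- arXiv:2401.00302 — 5 statements merged into one kernel-verified Lean document; each statement's English description precedes it below -/
import Mathlib

section
/- For every limit ordinal γ and every m ∈ ℕ, the posets ⟨P(γ + m), ⊆⟩ and ⟨P(γ), ⊆⟩ are order-isomorphic; an isomorphism is given by C ↦ C ∪ {γ, γ+1, …, γ+m−1}. -/
open Ordinal Set

/-- The set of copies of an ordinal `a`: subsets of the interval `[0, a)` that are
ranges of order-embeddings of `Iio a` into itself. -/
def Copies (a : Ordinal) : Set (Set Ordinal) :=
  {A | ∃ f : Set.Iio a ↪o Set.Iio a, A = Subtype.val '' Set.range ⇑f}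

lemma copies_subset {a : Ordinal} {A : Set Ordinal} (h : A ∈ Copies a) : A ⊆ Set.Iio a := by
  obtain ⟨f, rfl⟩ := h
  rintro x ⟨y, -, rfl⟩
  exact y.2

/-- elements in the tail `[γ, γ+m)` are of the form `γ + i`. -/
lemma tail_form {γ : Ordinal} {m : ℕ} {x : Ordinal} (h1 : γ ≤ x) (h2 : x < γ + m) :
    ∃ i : ℕ, i < m ∧ x = γ + i := by
  have hm : (0 : Ordinal) < m := by
    rcases Nat.eq_zero_or_pos m with hm | hm
    · subst hm; simp only [Nat.cast_zero, add_zero] at h2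
      exact absurd h2 (not_lt.2 h1)
    · exact_mod_cast hm
  have hs : x - γ < (m : Ordinal) := Ordinal.sub_lt_of_lt_add h2 hm
  obtain ⟨i, hi⟩ := Ordinal.lt_omega0.1 (hs.trans (Ordinal.nat_lt_omega0 m))
  refine ⟨i, ?_, ?_⟩
  · rw [hi] at hs; exact_mod_cast hs
  · rw [← hi, Ordinal.add_sub_cancel_of_le h1]

/-- The tail set. -/
def Tail (γ : Ordinal) (m : ℕ) : Set Ordinal := {b | ∃ i : ℕ, i < m ∧ b = γ + i}

lemma tail_subset {γ : Ordinal} {m : ℕ} : Tail γ m ⊆ Set.Ico γ (γ + m) := by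
  rintro x ⟨i, hi, rfl⟩
  exact ⟨le_self_add, (add_lt_add_iff_left γ).2 (by exact_mod_cast hi)⟩

/-- Characterization: copies of `γ + m` are exactly `B ∪ Tail γ m` for `B` a copy of `γ`. -/
lemma copies_add_iff (γ : Ordinal) (m : ℕ) (A : Set Ordinal) :
    A ∈ Copies (γ + m) ↔ ∃ B ∈ Copies γ, A = B ∪ Tail γ m := by
  constructor
  · rintro ⟨g, rfl⟩
    -- g fixes the tail
    have hfix : ∀ i : ℕ, i < m → ∀ (h : γ + i < γ + m), g ⟨γ + i, h⟩ = ⟨γ + i, h⟩ := by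
      intro i hi
      induction' hk : m - 1 - i with k IH generalizing i
      · -- i = m - 1 : top element
        intro h
        have hle : (g ⟨γ + i, h⟩ : Ordinal) ≤ γ + i := by
          have h2 : (g ⟨γ + i, h⟩ : Ordinal) < γ + m := (g ⟨γ + i, h⟩).2
          have : (m : Ordinal) = (i : Ordinal) + 1 := by
            have : m = i + 1 := by omega
            rw [this]; push_cast; ring
          have h3 : γ + (m : Ordinal) = (γ + i) + 1 := by rw [this, add_assoc]
          exact Order.lt_add_one_iff.mp (lt_of_lt_of_eq h2 h3)
        exact le_antisymm hle (g.strictMono.le_apply)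
      · intro h
        have hi1 : i + 1 < m := by omega
        have h1 : γ + (i + 1 : ℕ) < γ + m := (add_lt_add_iff_left γ).2 (by exact_mod_cast hi1)
        have hnext := IH (i + 1) hi1 (by omega) h1
        have hlt : g ⟨γ + i, h⟩ < g ⟨γ + (i + 1 : ℕ), h1⟩ := by
          apply g.strictMono
          show γ + (i : Ordinal) < γ + ((i : ℕ) + 1 : ℕ)
          push_cast
          rw [← add_assoc]
          exact lt_add_one _
        rw [hnext] at hlt
        have hle : (g ⟨γ + i, h⟩ : Ordinal) ≤ γ + i := by
          have : (g ⟨γ + i, h⟩ : Ordinal) < γ + (i + 1 : ℕ) := hlt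
          push_cast at this
          rw [← add_assoc] at this
          exact Order.lt_add_one_iff.mp this
        exact le_antisymm hle (g.strictMono.le_apply)
    -- g maps Iio γ into Iio γ
    have hrestr : ∀ x : Set.Iio (γ + m), (x : Ordinal) < γ → (g x : Ordinal) < γ := by
      intro x hx
      by_contra hge
      push_neg at hge
      obtain ⟨i, hi, hxi⟩ := tail_form hge (g x).2
      have h : γ + (i : Ordinal) < γ + m := hxi ▸ (g x).2
      have : g ⟨γ + i, h⟩ = g x := by
        rw [hfix i hi h]
        exact Subtype.ext hxi.symm
      have := g.injective this
      apply absurd hx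
      rw [← this]
      simp only [not_lt]
      exact le_self_add
    -- build restriction f : Iio γ ↪o Iio γ
    set f : Set.Iio γ → Set.Iio γ := fun x =>
      ⟨g ⟨x.1, x.2.trans_le (le_self_add : γ ≤ γ + (m : Ordinal))⟩, hrestr _ x.2⟩ with hf
    have hfmono : StrictMono f := by
      intro x y hxy
      exact g.strictMono (by exact_mod_cast hxy)
    refine ⟨Subtype.val '' Set.range (OrderEmbedding.ofStrictMono f hfmono),
      ⟨OrderEmbedding.ofStrictMono f hfmono, rfl⟩, ?_⟩
    ext x
    constructor
    · rintro ⟨y, ⟨z, rfl⟩, rfl⟩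
      by_cases hz : (z : Ordinal) < γ
      · left
        exact ⟨_, ⟨⟨z, hz⟩, rfl⟩, rfl⟩
      · right
        push_neg at hz
        obtain ⟨i, hi, hxi⟩ := tail_form hz z.2
        have h : γ + (i : Ordinal) < γ + m := hxi ▸ z.2
        have : z = ⟨γ + i, h⟩ := Subtype.ext hxi
        rw [this, hfix i hi h]
        exact ⟨i, hi, rfl⟩
    · rintro (⟨y, ⟨z, rfl⟩, rfl⟩ | ⟨i, hi, rfl⟩)
      · exact ⟨_, ⟨⟨(z : Ordinal), show (z : Ordinal) < γ + m from
          lt_of_lt_of_le z.2 (le_self_add)⟩, rfl⟩, rfl⟩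
      · have h : γ + (i : Ordinal) < γ + m := (add_lt_add_iff_left γ).2 (by exact_mod_cast hi)
        exact ⟨_, ⟨⟨γ + i, h⟩, rfl⟩, by rw [hfix i hi h]⟩
  · rintro ⟨B, ⟨f, rfl⟩, rfl⟩
    -- extend f by the identity on the tail
    set g : Set.Iio (γ + m) → Set.Iio (γ + m) := fun x =>
      if h : (x : Ordinal) < γ then
        ⟨f ⟨x, h⟩, (f ⟨x, h⟩).2.trans_le (le_self_add : γ ≤ γ + (m : Ordinal))⟩
      else x with hg
    have hgmono : StrictMono g := by
      intro x y hxy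
      simp only [hg]
      by_cases hx : (x : Ordinal) < γ <;> by_cases hy : (y : Ordinal) < γ
      · rw [dif_pos hx, dif_pos hy]
        exact_mod_cast f.strictMono (show (⟨x, hx⟩ : Set.Iio γ) < ⟨y, hy⟩ from hxy)
      · rw [dif_pos hx, dif_neg hy]
        push_neg at hy
        exact Subtype.coe_lt_coe.mp (lt_of_lt_of_le (f ⟨↑x, hx⟩).2 hy)
      · exact absurd (lt_trans (show (x : Ordinal) < (y : Ordinal) from hxy) hy) hx
      · rw [dif_neg hx, dif_neg hy]; exact hxy
    refine ⟨OrderEmbedding.ofStrictMono g hgmono, ?_⟩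
    ext x
    simp only [OrderEmbedding.coe_ofStrictMono]
    constructor
    · rintro (⟨y, ⟨z, rfl⟩, rfl⟩ | ⟨i, hi, rfl⟩)
      · refine ⟨_, ⟨⟨(z : Ordinal), show (z : Ordinal) < γ + m from
          lt_of_lt_of_le z.2 (le_self_add)⟩, rfl⟩, ?_⟩
        simp only [hg]
        rw [dif_pos (show ((z : Ordinal)) < γ from z.2)]
      · have h : γ + (i : Ordinal) < γ + m := (add_lt_add_iff_left γ).2 (by exact_mod_cast hi)
        refine ⟨_, ⟨⟨γ + i, h⟩, rfl⟩, ?_⟩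
        simp only [hg]
        rw [dif_neg (by simp only [not_lt]; exact le_self_add)]
    · rintro ⟨y, ⟨z, rfl⟩, rfl⟩
      simp only [hg]
      by_cases hz : (z : Ordinal) < γ
      · rw [dif_pos hz]
        exact Or.inl ⟨_, ⟨⟨z, hz⟩, rfl⟩, rfl⟩
      · rw [dif_neg hz]
        push_neg at hz
        obtain ⟨i, hi, hxi⟩ := tail_form hz z.2
        exact Or.inr ⟨i, hi, hxi⟩

/-- For every limit ordinal `γ` and every `m ∈ ℕ`, the posets `⟨P(γ+m), ⊆⟩` and
`⟨P(γ), ⊆⟩` are order-isomorphic, via `C ↦ C ∪ {γ, γ+1, …, γ+m-1}`. -/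
theorem stmt2 (γ : Ordinal) (hγ : Order.IsSuccLimit γ) (m : ℕ) :
    ∃ e : ↥(Copies γ) ≃o ↥(Copies (γ + m)),
      ∀ C : ↥(Copies γ),
        (e C : Set Ordinal) = (C : Set Ordinal) ∪ {b | ∃ i : ℕ, i < m ∧ b = γ + i} := by
  have key : ∀ B ∈ Copies γ, (B ∪ Tail γ m) ∩ Set.Iio γ = B := by
    intro B hB
    ext x
    constructor
    · rintro ⟨hx1 | hx1, hx2⟩
      · exact hx1
      · exact absurd hx2 (not_lt.2 (tail_subset hx1).1)
    · intro hx
      exact ⟨Or.inl hx, copies_subset hB hx⟩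
  refine ⟨{
    toFun := fun C => ⟨(C : Set Ordinal) ∪ Tail γ m,
      (copies_add_iff γ m _).mpr ⟨C, C.2, rfl⟩⟩
    invFun := fun A => ⟨(A : Set Ordinal) ∩ Set.Iio γ, by
      obtain ⟨B, hB, hBe⟩ := (copies_add_iff γ m _).mp A.2
      rw [hBe, key B hB]; exact hB⟩
    left_inv := by
      intro C
      apply Subtype.ext
      exact key _ C.2
    right_inv := by
      intro A
      apply Subtype.ext
      obtain ⟨B, hB, hBe⟩ := (copies_add_iff γ m _).mp A.2
      show ((A : Set Ordinal) ∩ Set.Iio γ) ∪ Tail γ m = A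
      rw [hBe, key B hB]
    map_rel_iff' := by
      intro C C'
      show (C : Set Ordinal) ∪ Tail γ m ⊆ (C' : Set Ordinal) ∪ Tail γ m ↔
        (C : Set Ordinal) ⊆ (C' : Set Ordinal)
      constructor
      · intro h x hx
        rcases h (Or.inl hx) with h' | h'
        · exact h'
        · exact absurd (copies_subset C.2 hx) (not_lt.2 (tail_subset h').1)
      · intro h
        exact union_subset_union_left _ h
  }, fun C => rfl⟩
end

section
/- For every limit ordinal γ and every m ∈ ℕ, P(γ + m) = { C ∪ {γ + i : i < m} : C ∈ P(γ) }; that is, a subset A ⊆ γ + m is a copy of γ + m if and only if A contains all ordinals γ, γ+1, …, γ+m−1 and A ∩ γ is a copy of γ. -/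
open Ordinal Set

lemma tail_mem {γ : Ordinal} {m : ℕ} {b : Ordinal} (h1 : γ ≤ b) (h2 : b < γ + m) :
    ∃ i : ℕ, i < m ∧ b = γ + i := by
  have hc : γ + (b - γ) = b := Ordinal.add_sub_cancel_of_le h1
  have hlt : b - γ < (m : Ordinal) := by
    rwa [← hc, add_lt_add_iff_left] at h2
  obtain ⟨n, hn⟩ := Ordinal.lt_omega0.mp (hlt.trans (Ordinal.nat_lt_omega0 m))
  refine ⟨n, ?_, by rw [← hc, hn]⟩
  rw [hn] at hlt
  exact_mod_cast hlt

lemma mem_Iio_of_lt {γ : Ordinal} {m i : ℕ} (hi : i < m) :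
    γ + (i : Ordinal) ∈ Set.Iio (γ + (m : Ordinal)) :=
  (add_lt_add_iff_left γ).mpr (by exact_mod_cast hi)

lemma fix_tail {γ : Ordinal} {m : ℕ}
    (f : Set.Iio (γ + (m : Ordinal)) ↪o Set.Iio (γ + (m : Ordinal)))
    {i : ℕ} (hi : i < m) :
    f ⟨γ + i, mem_Iio_of_lt hi⟩ = ⟨γ + i, mem_Iio_of_lt hi⟩ := by
  have aux : ∀ k : ℕ, ∀ j : ℕ, (hj : j < m) → m - 1 - j ≤ k →
      ((f ⟨γ + (j : Ordinal), mem_Iio_of_lt hj⟩ :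
        Set.Iio (γ + (m : Ordinal))) : Ordinal) = γ + (j : Ordinal) := by
    intro k
    induction k with
    | zero =>
      intro j hj hjk
      have hle : γ + (j : Ordinal) ≤
          (f ⟨γ + (j : Ordinal), mem_Iio_of_lt hj⟩ : Set.Iio _).1 :=
        f.strictMono.le_apply
      have hlt : (f ⟨γ + (j : Ordinal), mem_Iio_of_lt hj⟩ : Set.Iio _).1 <
          γ + (m : Ordinal) := (f _).2
      have hm : (m : Ordinal) = (j : Ordinal) + 1 := by
        exact_mod_cast (show m = j + 1 by omega)
      have hlt2 : (f ⟨γ + (j : Ordinal), mem_Iio_of_lt hj⟩ : Set.Iio _).1 <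
          γ + (j : Ordinal) + 1 := by
        rw [add_assoc, ← hm]; exact hlt
      exact le_antisymm (Order.lt_add_one_iff.mp hlt2) hle
    | succ k ih =>
      intro j hj hjk
      rcases Nat.lt_or_ge (m - 1 - j) (k + 1) with h | h
      · exact ih j hj (by omega)
      · have hj1 : j + 1 < m := by omega
        have ihj1 := ih (j + 1) hj1 (by omega)
        have hle : γ + (j : Ordinal) ≤
            (f ⟨γ + (j : Ordinal), mem_Iio_of_lt hj⟩ : Set.Iio _).1 :=
          f.strictMono.le_apply
        have harg : (⟨γ + (j : Ordinal), mem_Iio_of_lt hj⟩ :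
              Set.Iio (γ + (m : Ordinal))) <
            ⟨γ + ((j + 1 : ℕ) : Ordinal), mem_Iio_of_lt hj1⟩ := by
          refine Subtype.coe_lt_coe.mp ((add_lt_add_iff_left γ).mpr ?_)
          exact_mod_cast Nat.lt_succ_self j
        have hlt := Subtype.coe_lt_coe.mpr (f.strictMono harg)
        rw [ihj1] at hlt
        have hcast : γ + ((j + 1 : ℕ) : Ordinal) = γ + (j : Ordinal) + 1 := by
          push_cast
          rw [add_assoc]
        rw [hcast] at hlt
        exact le_antisymm (Order.lt_add_one_iff.mp hlt) hle
  exact Subtype.ext (aux (m - 1 - i) i hi le_rfl)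

lemma copies_iff {γ : Ordinal} {m : ℕ} {A : Set Ordinal}
    (hA : A ⊆ Set.Iio (γ + (m : Ordinal))) :
    A ∈ Copies (γ + m) ↔
      {b | ∃ i : ℕ, i < m ∧ b = γ + i} ⊆ A ∧ A ∩ Set.Iio γ ∈ Copies γ := by
  have hsub : ∀ x : Ordinal, x < γ → x < γ + (m : Ordinal) :=
    fun x hx => hx.trans_le (le_self_add)
  constructor
  · rintro ⟨f, rfl⟩
    have hfg : ∀ x : Set.Iio γ, ((f ⟨x.1, hsub x.1 x.2⟩ : Set.Iio _) : Ordinal) < γ := by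
      intro x
      rcases Nat.eq_zero_or_pos m with hm | hm
      · subst hm
        have h2 := (f ⟨x.1, hsub x.1 x.2⟩).2
        simp only [Set.mem_Iio, Nat.cast_zero, add_zero] at h2
        exact h2
      · have hfix := fix_tail f hm
        have harg : (⟨x.1, hsub x.1 x.2⟩ : Set.Iio (γ + (m : Ordinal))) <
            ⟨γ + ((0 : ℕ) : Ordinal), mem_Iio_of_lt hm⟩ := by
          refine Subtype.coe_lt_coe.mp ?_
          show x.1 < γ + ((0 : ℕ) : Ordinal)
          rw [Nat.cast_zero, add_zero]
          exact x.2
        have hlt := Subtype.coe_lt_coe.mpr (f.strictMono harg)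
        rw [hfix] at hlt
        show ((f ⟨x.1, hsub x.1 x.2⟩ : Set.Iio _) : Ordinal) < γ
        calc ((f ⟨x.1, hsub x.1 x.2⟩ : Set.Iio _) : Ordinal)
            < γ + ((0 : ℕ) : Ordinal) := hlt
          _ = γ := by rw [Nat.cast_zero, add_zero]
    constructor
    · rintro b ⟨i, hi, rfl⟩
      exact ⟨f ⟨γ + i, mem_Iio_of_lt hi⟩, ⟨_, rfl⟩, by rw [fix_tail f hi]⟩
    · refine ⟨OrderEmbedding.ofStrictMono
        (fun x => ⟨(f ⟨x.1, hsub x.1 x.2⟩ : Set.Iio _).1, hfg x⟩) ?_, ?_⟩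
      · intro x y hxy
        refine Subtype.coe_lt_coe.mp ?_
        show ((f ⟨x.1, hsub x.1 x.2⟩ : Set.Iio _) : Ordinal) <
          ((f ⟨y.1, hsub y.1 y.2⟩ : Set.Iio _) : Ordinal)
        exact Subtype.coe_lt_coe.mpr
          (f.strictMono (Subtype.coe_lt_coe.mp (Subtype.coe_lt_coe.mpr hxy)))
      · ext b
        constructor
        · rintro ⟨⟨z, ⟨w, rfl⟩, rfl⟩, hbγ⟩
          have hw : w.1 < γ := by
            by_contra hge
            obtain ⟨i, hi, hwi⟩ := tail_mem (le_of_not_gt hge) w.2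
            have hfw : f w = ⟨γ + i, mem_Iio_of_lt hi⟩ := by
              rw [show w = (⟨γ + i, mem_Iio_of_lt hi⟩ :
                Set.Iio (γ + (m : Ordinal))) from Subtype.ext hwi]
              exact fix_tail f hi
            rw [hfw] at hbγ
            exact absurd hbγ (not_lt.mpr (le_self_add (a := γ) (b := (i : Ordinal))))
          refine ⟨⟨(f ⟨w.1, hsub w.1 hw⟩ : Set.Iio _).1, hfg ⟨w.1, hw⟩⟩,
            ⟨⟨w.1, hw⟩, rfl⟩, ?_⟩
          have hww : (⟨w.1, hsub w.1 hw⟩ : Set.Iio (γ + (m : Ordinal))) = w :=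
            Subtype.ext rfl
          simp only [hww]
        · rintro ⟨z, ⟨x, rfl⟩, rfl⟩
          exact ⟨⟨f ⟨x.1, hsub x.1 x.2⟩, ⟨_, rfl⟩, rfl⟩, hfg x⟩
  · rintro ⟨htail, g, hg⟩
    classical
    let F : Set.Iio (γ + (m : Ordinal)) → Set.Iio (γ + (m : Ordinal)) := fun x =>
      if h : x.1 < γ then ⟨(g ⟨x.1, h⟩ : Set.Iio γ).1, hsub _ (g ⟨x.1, h⟩).2⟩ else x
    have hFmono : StrictMono F := by
      intro x y hxy
      have hxy' : x.1 < y.1 := Subtype.coe_lt_coe.mpr hxy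
      by_cases hx : x.1 < γ <;> by_cases hy : y.1 < γ
      · have hg' := g.strictMono (show (⟨x.1, hx⟩ : Set.Iio γ) < ⟨y.1, hy⟩ from
          Subtype.coe_lt_coe.mp hxy')
        simp only [F, dif_pos hx, dif_pos hy]
        exact Subtype.coe_lt_coe.mp (Subtype.coe_lt_coe.mpr hg')
      · simp only [F, dif_pos hx, dif_neg hy]
        exact Subtype.coe_lt_coe.mp
          (lt_of_lt_of_le (g ⟨x.1, hx⟩).2 (le_of_not_gt hy))
      · exact absurd (hxy'.trans hy) hx
      · simp only [F, dif_neg hx, dif_neg hy]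
        exact hxy
    refine ⟨OrderEmbedding.ofStrictMono F hFmono, ?_⟩
    ext b
    constructor
    · intro hb
      by_cases hbγ : b < γ
      · have hbg : b ∈ Subtype.val '' Set.range ⇑g := hg ▸ ⟨hb, hbγ⟩
        obtain ⟨z, ⟨x, rfl⟩, rfl⟩ := hbg
        refine ⟨F ⟨x.1, hsub x.1 x.2⟩, ⟨⟨x.1, hsub x.1 x.2⟩, rfl⟩, ?_⟩
        show (F ⟨x.1, hsub x.1 x.2⟩ : Ordinal) = (g x : Ordinal)
        simp only [F]
        rw [dif_pos (show (x : Ordinal) < γ from x.2)]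
      · exact ⟨F ⟨b, hA hb⟩, ⟨⟨b, hA hb⟩, rfl⟩, by simp only [F, dif_neg hbγ]⟩
    · rintro ⟨z, ⟨x, rfl⟩, rfl⟩
      show (F x : Ordinal) ∈ A
      by_cases hx : x.1 < γ
      · simp only [F, dif_pos hx]
        have hmem : (g ⟨x.1, hx⟩ : Set.Iio γ).1 ∈ Subtype.val '' Set.range ⇑g :=
          ⟨g ⟨x.1, hx⟩, ⟨_, rfl⟩, rfl⟩
        rw [← hg] at hmem
        exact hmem.1
      · simp only [F, dif_neg hx]
        obtain ⟨i, hi, hxi⟩ := tail_mem (le_of_not_gt hx) x.2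
        exact htail ⟨i, hi, hxi⟩

/-- For every limit ordinal `γ` and `m ∈ ℕ`,
`P(γ+m) = { C ∪ {γ+i : i < m} : C ∈ P(γ) }`; that is, `A ⊆ γ+m` is a copy of `γ+m`
iff `A` contains all `γ+i` (`i < m`) and `A ∩ γ` is a copy of `γ`. -/
theorem stmt3 (γ : Ordinal) (hγ : Order.IsSuccLimit γ) (m : ℕ) :
    Copies (γ + m) =
      (fun C : Set Ordinal => C ∪ {b | ∃ i : ℕ, i < m ∧ b = γ + i}) '' Copies γ ∧
    (∀ A : Set Ordinal, A ⊆ Set.Iio (γ + m) →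
      (A ∈ Copies (γ + m) ↔
        {b | ∃ i : ℕ, i < m ∧ b = γ + i} ⊆ A ∧ A ∩ Set.Iio γ ∈ Copies γ)) := by
  constructor
  · ext A
    constructor
    · intro hA
      have hAsub := copies_subset hA
      obtain ⟨htail, hC⟩ := (copies_iff hAsub).mp hA
      refine ⟨A ∩ Set.Iio γ, hC, ?_⟩
      ext b
      simp only [Set.mem_union, Set.mem_inter_iff, Set.mem_Iio, Set.mem_setOf_eq]
      constructor
      · rintro (⟨hb, -⟩ | hb)
        · exact hb
        · exact htail hb
      · intro hb
        by_cases hbγ : b < γ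
        · exact Or.inl ⟨hb, hbγ⟩
        · exact Or.inr (tail_mem (le_of_not_gt hbγ) (hAsub hb))
    · rintro ⟨C, hC, rfl⟩
      have hCsub := copies_subset hC
      have hA : C ∪ {b | ∃ i : ℕ, i < m ∧ b = γ + i} ⊆ Set.Iio (γ + (m : Ordinal)) := by
        rintro b (hb | ⟨i, hi, rfl⟩)
        · exact (Set.mem_Iio.mp (hCsub hb)).trans_le (le_self_add)
        · exact mem_Iio_of_lt hi
      refine (copies_iff hA).mpr ⟨Set.subset_union_right, ?_⟩
      have hEq : (C ∪ {b | ∃ i : ℕ, i < m ∧ b = γ + i}) ∩ Set.Iio γ = C := by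
        ext b
        constructor
        · rintro ⟨hb | ⟨i, hi, rfl⟩, hbγ⟩
          · exact hb
          · exact absurd hbγ (not_lt.mpr (le_self_add (a := γ) (b := (i : Ordinal))))
        · exact fun hb => ⟨Or.inl hb, hCsub hb⟩
      rw [hEq]
      exact hC
  · exact fun A hA => copies_iff hA
end

section
/- If α = ω^{δ_n}·s_n + … + ω^{δ_1}·s_1 + m is an infinite ordinal presented in Cantor normal form, where n, s_1, …, s_n are positive natural numbers, 0 < δ_1 < … < δ_n are ordinals and m ∈ ω, then the poset ⟨P(α), ⊆⟩ is order-isomorphic to the product ∏_{i=1}^{n} (⟨P(ω^{δ_i}), ⊆⟩)^{s_i}, where products of posets carry the coordinatewise order. -/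
open Ordinal Set

lemma emb_le {c : Ordinal} (f : Iio c ↪o Iio c) (x : Iio c) : (x:Ordinal) ≤ f x := by
  exact_mod_cast f.strictMono.le_apply (x := x)

lemma le_of_strictMono_Iio {c d : Ordinal} (g : Iio c → Iio d) (hg : StrictMono g) : c ≤ d := by
  by_contra h
  push_neg at h
  have hg' : StrictMono (fun x : Iio c => (⟨(g x : Ordinal), (g x).2.trans h⟩ : Iio c)) := by
    intro x y hxy
    exact hg hxy
  have h1 := hg'.le_apply (x := (⟨d, h⟩ : Iio c))
  have h2 : ((g ⟨d, h⟩ : Iio d) : Ordinal) < d := (g ⟨d, h⟩).2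
  exact absurd ((Subtype.mk_le_mk.1 h1).trans_lt h2) (lt_irrefl _)

lemma copies_subset_s4 {c : Ordinal} {A : Set Ordinal} (hA : A ∈ Copies c) : A ⊆ Iio c := by
  obtain ⟨f, rfl⟩ := hA
  rintro x ⟨z, -, rfl⟩
  exact z.2

lemma sub_lt_iff' {a v b : Ordinal} (h : a ≤ v) : v - a < b ↔ v < a + b := by
  rw [← add_lt_add_iff_left a, Ordinal.add_sub_cancel_of_le h]

section Split
variable {a b : Ordinal}

lemma split_copies (hind : ∀ x < a, x + a = a) (hb : b < a + b)
    {A : Set Ordinal} (hA : A ∈ Copies (a + b)) :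
    A ∩ Iio a ∈ Copies a ∧ {x | a + x ∈ A} ∈ Copies b := by
  obtain ⟨f, rfl⟩ := hA
  -- values below a stay below a
  have claim1 : ∀ x : Iio (a + b), (x : Ordinal) < a → ((f x : Iio (a+b)) : Ordinal) < a := by
    by_contra hcl
    push_neg at hcl
    obtain ⟨x, hxa, hax⟩ := hcl
    have hx : ∀ y : Iio (a + b), (x : Ordinal) + y < a + b := by
      intro y
      calc (x : Ordinal) + y < x + (a + b) := add_lt_add_right y.2 _
        _ = (x + a) + b := (add_assoc _ _ _).symm
        _ = a + b := by rw [hind x hxa]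
    have hfle : ∀ y : Iio (a + b), a ≤ ((f ⟨x + y, hx y⟩ : Iio (a+b)) : Ordinal) := by
      intro y
      refine hax.trans ?_
      have : x ≤ (⟨(x : Ordinal) + y, hx y⟩ : Iio (a+b)) := (le_self_add : (x:Ordinal) ≤ x + y)
      exact_mod_cast f.monotone this
    have hg : StrictMono (fun y : Iio (a + b) =>
        (⟨((f ⟨x + y, hx y⟩ : Iio (a+b)) : Ordinal) - a,
          (sub_lt_iff' (hfle y)).2 (f ⟨x + y, hx y⟩).2⟩ : Iio b)) := by
      intro y1 y2 h12
      have hlt : ((f ⟨x + y1, hx y1⟩ : Iio (a+b)) : Ordinal) < f ⟨x + y2, hx y2⟩ := by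
        exact_mod_cast f.strictMono (Subtype.mk_lt_mk.2
          (add_lt_add_right (show (y1:Ordinal) < y2 from h12) _))
      dsimp only
      show (_ : Ordinal) < _
      rw [← add_lt_add_iff_left a,
        Ordinal.add_sub_cancel_of_le (hfle y1), Ordinal.add_sub_cancel_of_le (hfle y2)]
      exact hlt
    exact absurd (le_of_strictMono_Iio _ hg) (not_le.2 hb)
  have claim2 : ∀ x : Iio (a+b), (x : Ordinal) ≤ f x := emb_le f
  -- the two restricted embeddings
  have hfa : StrictMono (fun x : Iio a =>
      (⟨((f ⟨x, x.2.trans_le ((le_self_add : a ≤ a + b))⟩ : Iio (a+b)) : Ordinal),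
        claim1 _ x.2⟩ : Iio a)) := by
    intro x y hxy
    dsimp only
    show (_ : Ordinal) < _
    have hxy' : (⟨(x:Ordinal), x.2.trans_le ((le_self_add : a ≤ a + b))⟩ : Iio (a+b)) <
        ⟨(y:Ordinal), y.2.trans_le ((le_self_add : a ≤ a + b))⟩ := Subtype.mk_lt_mk.2 hxy
    exact_mod_cast f.strictMono hxy'
  have hble : ∀ y : Iio b, a ≤ ((f ⟨a + y, add_lt_add_right y.2 a⟩ : Iio (a+b)) : Ordinal) :=
    fun y => (le_self_add : a ≤ a + y).trans (claim2 _)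
  have hfb : StrictMono (fun y : Iio b =>
      (⟨((f ⟨a + y, add_lt_add_right y.2 a⟩ : Iio (a+b)) : Ordinal) - a,
        (sub_lt_iff' (hble y)).2 (f _).2⟩ : Iio b)) := by
    intro y1 y2 h12
    dsimp only
    show (_ : Ordinal) < _
    rw [← add_lt_add_iff_left a,
      Ordinal.add_sub_cancel_of_le (hble y1), Ordinal.add_sub_cancel_of_le (hble y2)]
    have h12' : (⟨a + (y1:Ordinal), add_lt_add_right y1.2 a⟩ : Iio (a+b)) <
        ⟨a + (y2:Ordinal), add_lt_add_right y2.2 a⟩ :=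
      Subtype.mk_lt_mk.2 (add_lt_add_right (show (y1:Ordinal) < y2 from h12) a)
    exact_mod_cast f.strictMono h12'
  constructor
  · refine ⟨OrderEmbedding.ofStrictMono _ hfa, ?_⟩
    ext x
    constructor
    · rintro ⟨⟨u, ⟨w, rfl⟩, rfl⟩, hxa⟩
      have hwa : (w : Ordinal) < a := (claim2 w).trans_lt hxa
      refine ⟨_, ⟨⟨(w : Ordinal), hwa⟩, rfl⟩, ?_⟩
      simp only [OrderEmbedding.coe_ofStrictMono]
    · rintro ⟨u, ⟨w, rfl⟩, rfl⟩
      simp only [OrderEmbedding.coe_ofStrictMono]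
      exact ⟨⟨_, ⟨_, rfl⟩, rfl⟩, claim1 _ w.2⟩
  · refine ⟨OrderEmbedding.ofStrictMono _ hfb, ?_⟩
    ext y
    constructor
    · rintro hy
      obtain ⟨u, ⟨z, rfl⟩, hval⟩ := hy
      have haz : a ≤ (z : Ordinal) := by
        by_contra hza
        push_neg at hza
        have := claim1 z hza
        rw [hval] at this
        exact absurd this (not_lt.2 (le_self_add : a ≤ a + y))
      refine ⟨_, ⟨⟨(z : Ordinal) - a, (sub_lt_iff' haz).2 z.2⟩, rfl⟩, ?_⟩
      simp only [OrderEmbedding.coe_ofStrictMono]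
      have hz : (⟨a + ((z : Ordinal) - a),
          add_lt_add_right ((sub_lt_iff' haz).2 z.2) a⟩ : Iio (a+b)) = z :=
        Subtype.ext (Ordinal.add_sub_cancel_of_le haz)
      rw [hz, hval, Ordinal.add_sub_cancel]
    · rintro ⟨u, ⟨w, rfl⟩, rfl⟩
      simp only [OrderEmbedding.coe_ofStrictMono, mem_setOf_eq]
      rw [Ordinal.add_sub_cancel_of_le (hble w)]
      exact ⟨_, ⟨_, rfl⟩, rfl⟩

end Split

section Glue
variable {a b : Ordinal}

lemma glue_copies {B C : Set Ordinal} (hB : B ∈ Copies a) (hC : C ∈ Copies b) :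
    B ∪ (fun x => a + x) '' C ∈ Copies (a + b) := by
  obtain ⟨fa, rfl⟩ := hB
  obtain ⟨fb, rfl⟩ := hC
  classical
  have hsub : ∀ z : Iio (a + b), ¬ (z : Ordinal) < a → (z : Ordinal) - a < b :=
    fun z hz => (sub_lt_iff' (not_lt.1 hz)).2 z.2
  set g : Iio (a + b) → Iio (a + b) := fun z =>
    if h : (z : Ordinal) < a then
      ⟨(fa ⟨z, h⟩ : Ordinal), (fa ⟨(z:Ordinal), h⟩).2.trans_le ((le_self_add : a ≤ a + b))⟩
    else
      ⟨a + (fb ⟨(z : Ordinal) - a, hsub z h⟩ : Ordinal),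
        add_lt_add_right (fb ⟨(z:Ordinal) - a, hsub z h⟩).2 a⟩ with hg
  have hmono : StrictMono g := by
    intro z1 z2 h12
    by_cases h1 : (z1 : Ordinal) < a
    · by_cases h2 : (z2 : Ordinal) < a
      · simp only [hg, dif_pos h1, dif_pos h2, Subtype.mk_lt_mk]
        exact_mod_cast fa.strictMono (Subtype.mk_lt_mk.2 (show (z1:Ordinal) < z2 from h12))
      · simp only [hg, dif_pos h1, dif_neg h2, Subtype.mk_lt_mk]
        show (_ : Ordinal) < _
        exact (fa _).2.trans_le le_self_add
    · have h2 : ¬ (z2 : Ordinal) < a := fun h => h1 ((show (z1:Ordinal) < z2 from h12).trans h)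
      simp only [hg, dif_neg h1, dif_neg h2, Subtype.mk_lt_mk, add_lt_add_iff_left]
      have : ((⟨(z1 : Ordinal) - a, hsub z1 h1⟩ : Iio b)) < ⟨(z2 : Ordinal) - a, hsub z2 h2⟩ := by
        show (_ : Ordinal) < _
        rw [← add_lt_add_iff_left a,
          Ordinal.add_sub_cancel_of_le (not_lt.1 h1), Ordinal.add_sub_cancel_of_le
          ((not_lt.1 h1).trans (le_of_lt (show (z1:Ordinal) < z2 from h12)))]
        exact h12
      show (_ : Ordinal) < _
      rw [add_lt_add_iff_left]
      exact_mod_cast fb.strictMono this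
  refine ⟨OrderEmbedding.ofStrictMono g hmono, ?_⟩
  ext x
  constructor
  · rintro (⟨u, ⟨w, rfl⟩, rfl⟩ | ⟨c, ⟨u, ⟨w, rfl⟩, rfl⟩, rfl⟩)
    · refine ⟨_, ⟨⟨(w : Ordinal), w.2.trans_le ((le_self_add : a ≤ a + b))⟩, rfl⟩, ?_⟩
      simp only [OrderEmbedding.coe_ofStrictMono, hg]
      rw [dif_pos (show (w:Ordinal) < a from w.2)]
    · refine ⟨_, ⟨⟨a + (w : Ordinal), add_lt_add_right w.2 a⟩, rfl⟩, ?_⟩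
      have hna : ¬ a + (w : Ordinal) < a := not_lt.2 (le_self_add : a ≤ a + w)
      simp only [OrderEmbedding.coe_ofStrictMono, hg, dif_neg hna]
      congr 1
      have : (⟨a + (w : Ordinal) - a, hsub ⟨a + w, add_lt_add_right w.2 a⟩ hna⟩ : Iio b) = w :=
        Subtype.ext (Ordinal.add_sub_cancel a w)
      rw [this]
  · rintro ⟨u, ⟨z, rfl⟩, rfl⟩
    simp only [OrderEmbedding.coe_ofStrictMono, hg]
    by_cases h : (z : Ordinal) < a
    · rw [dif_pos h]
      exact Or.inl ⟨_, ⟨_, rfl⟩, rfl⟩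
    · rw [dif_neg h]
      exact Or.inr ⟨_, ⟨_, ⟨_, rfl⟩, rfl⟩, rfl⟩

lemma glue_eta (A : Set Ordinal) :
    (A ∩ Iio a) ∪ (fun x => a + x) '' {x | a + x ∈ A} = A := by
  ext x
  constructor
  · rintro (⟨hx, -⟩ | ⟨c, hc, rfl⟩)
    · exact hx
    · exact hc
  · intro hx
    rcases lt_or_ge x a with h | h
    · exact Or.inl ⟨hx, h⟩
    · exact Or.inr ⟨x - a, by simpa [Ordinal.add_sub_cancel_of_le h] using hx,
        Ordinal.add_sub_cancel_of_le h⟩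

lemma pi1_glue {B C : Set Ordinal} (hB : B ⊆ Iio a) :
    (B ∪ (fun x => a + x) '' C) ∩ Iio a = B := by
  ext x
  constructor
  · rintro ⟨(hx | ⟨c, -, rfl⟩), hxa⟩
    · exact hx
    · exact absurd hxa (not_lt.2 (le_self_add : a ≤ a + c))
  · exact fun hx => ⟨Or.inl hx, hB hx⟩

lemma pi2_glue {B C : Set Ordinal} (hB : B ⊆ Iio a) :
    {x | a + x ∈ B ∪ (fun x => a + x) '' C} = C := by
  ext y
  constructor
  · rintro (hy | ⟨c, hc, hcy⟩)
    · exact absurd (hB hy) (not_lt.2 (le_self_add : a ≤ a + y))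
    · have : c = y := (add_right_inj a).1 hcy
      rwa [this] at hc
  · exact fun hy => Or.inr ⟨y, hy, rfl⟩

/-- The splitting order isomorphism. -/
def splitIso (a b : Ordinal) (hind : ∀ x < a, x + a = a) (hb : b < a + b) :
    ↥(Copies (a + b)) ≃o ↥(Copies a) × ↥(Copies b) where
  toFun A := (⟨A.1 ∩ Iio a, (split_copies hind hb A.2).1⟩,
    ⟨{x | a + x ∈ A.1}, (split_copies hind hb A.2).2⟩)
  invFun P := ⟨P.1.1 ∪ (fun x => a + x) '' P.2.1, glue_copies P.1.2 P.2.2⟩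
  left_inv A := by
    ext1
    exact glue_eta A.1
  right_inv P := by
    obtain ⟨B, C⟩ := P
    refine Prod.ext (Subtype.ext ?_) (Subtype.ext ?_)
    · exact pi1_glue (copies_subset_s4 B.2)
    · exact pi2_glue (copies_subset_s4 B.2)
  map_rel_iff' := by
    rintro ⟨A, hA⟩ ⟨A', hA'⟩
    constructor
    · rintro ⟨h1, h2⟩
      show A ⊆ A'
      rw [← glue_eta (a := a) A, ← glue_eta (a := a) A']
      exact union_subset_union h1 (image_mono h2)
    · intro h
      exact ⟨inter_subset_inter_left _ h, fun x hx => h hx⟩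

section Succ
variable {c : Ordinal}

lemma succ_copies {A : Set Ordinal} (hA : A ∈ Copies (c + 1)) :
    A ∩ Iio c ∈ Copies c ∧ c ∈ A := by
  obtain ⟨f, rfl⟩ := hA
  have htop : c < c + 1 := Order.lt_add_one_iff.2 le_rfl
  set top : Iio (c + 1) := ⟨c, htop⟩ with htopdef
  have hftop : ((f top : Iio (c+1)) : Ordinal) = c :=
    le_antisymm (Order.lt_add_one_iff.1 (f top).2) (emb_le f top)
  have claim1 : ∀ x : Iio (c + 1), (x : Ordinal) < c → ((f x : Iio (c+1)) : Ordinal) < c := by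
    intro x hx
    have h2 : f x < f top := f.strictMono (show x < top from hx)
    exact lt_of_lt_of_le (show ((f x : Iio (c+1)) : Ordinal) < f top from h2) hftop.le
  have hfa : StrictMono (fun x : Iio c =>
      (⟨((f ⟨x, x.2.trans htop⟩ : Iio (c+1)) : Ordinal), claim1 _ x.2⟩ : Iio c)) := by
    intro x y hxy
    dsimp only
    show (_ : Ordinal) < _
    have hxy' : (⟨(x:Ordinal), x.2.trans htop⟩ : Iio (c+1)) < ⟨(y:Ordinal), y.2.trans htop⟩ :=
      Subtype.mk_lt_mk.2 hxy
    exact_mod_cast f.strictMono hxy'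
  constructor
  · refine ⟨OrderEmbedding.ofStrictMono _ hfa, ?_⟩
    ext x
    constructor
    · rintro ⟨⟨u, ⟨w, rfl⟩, rfl⟩, hxa⟩
      have hwa : (w : Ordinal) < c := (emb_le f w).trans_lt hxa
      refine ⟨_, ⟨⟨(w : Ordinal), hwa⟩, rfl⟩, ?_⟩
      simp only [OrderEmbedding.coe_ofStrictMono]
    · rintro ⟨u, ⟨w, rfl⟩, rfl⟩
      simp only [OrderEmbedding.coe_ofStrictMono]
      exact ⟨⟨_, ⟨_, rfl⟩, rfl⟩, claim1 _ w.2⟩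
  · exact ⟨f top, ⟨top, rfl⟩, hftop⟩

lemma succ_recover {A : Set Ordinal} (hA : A ∈ Copies (c + 1)) :
    insert c (A ∩ Iio c) = A := by
  have hsub := copies_subset_s4 hA
  have hc := (succ_copies hA).2
  ext x
  constructor
  · rintro (rfl | ⟨hx, -⟩)
    · exact hc
    · exact hx
  · intro hx
    rcases lt_or_eq_of_le (show x ≤ c from Order.lt_add_one_iff.1 (hsub hx)) with h | h
    · exact Or.inr ⟨hx, h⟩
    · exact Or.inl h

lemma succ_glue {B : Set Ordinal} (hB : B ∈ Copies c) : insert c B ∈ Copies (c + 1) := by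
  obtain ⟨fa, rfl⟩ := hB
  classical
  have htop : c < c + 1 := Order.lt_add_one_iff.2 le_rfl
  set g : Iio (c + 1) → Iio (c + 1) := fun z =>
    if h : (z : Ordinal) < c then ⟨(fa ⟨z, h⟩ : Ordinal), (fa ⟨(z:Ordinal), h⟩).2.trans htop⟩
    else ⟨c, htop⟩ with hg
  have hmono : StrictMono g := by
    intro z1 z2 h12
    by_cases h1 : (z1 : Ordinal) < c
    · by_cases h2 : (z2 : Ordinal) < c
      · simp only [hg, dif_pos h1, dif_pos h2, Subtype.mk_lt_mk]
        exact_mod_cast fa.strictMono (Subtype.mk_lt_mk.2 (show (z1:Ordinal) < z2 from h12))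
      · simp only [hg, dif_pos h1, dif_neg h2, Subtype.mk_lt_mk]
        exact (fa _).2
    · exfalso
      have hz2 : (z2 : Ordinal) ≤ c := Order.lt_add_one_iff.1 z2.2
      exact h1 ((show (z1:Ordinal) < z2 from h12).trans_le hz2)
  refine ⟨OrderEmbedding.ofStrictMono g hmono, ?_⟩
  ext x
  constructor
  · rintro (hxc | ⟨u, ⟨w, rfl⟩, rfl⟩)
    · refine ⟨_, ⟨⟨c, htop⟩, rfl⟩, ?_⟩
      simp only [OrderEmbedding.coe_ofStrictMono, hg]
      rw [dif_neg (lt_irrefl c)]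
      exact hxc.symm
    · refine ⟨_, ⟨⟨(w : Ordinal), w.2.trans htop⟩, rfl⟩, ?_⟩
      simp only [OrderEmbedding.coe_ofStrictMono, hg]
      rw [dif_pos (show (w:Ordinal) < c from w.2)]
  · rintro ⟨u, ⟨z, rfl⟩, rfl⟩
    simp only [OrderEmbedding.coe_ofStrictMono, hg]
    by_cases h : (z : Ordinal) < c
    · rw [dif_pos h]
      exact Or.inr ⟨_, ⟨_, rfl⟩, rfl⟩
    · rw [dif_neg h]
      exact Or.inl rfl

def succIso (c : Ordinal) : ↥(Copies (c + 1)) ≃o ↥(Copies c) where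
  toFun A := ⟨A.1 ∩ Iio c, (succ_copies A.2).1⟩
  invFun B := ⟨insert c B.1, succ_glue B.2⟩
  left_inv A := Subtype.ext (succ_recover A.2)
  right_inv B := by
    refine Subtype.ext ?_
    have hsub := copies_subset_s4 B.2
    ext x
    constructor
    · rintro ⟨(hxc | hx), hxc2⟩
      · exact absurd (hxc ▸ hxc2) (lt_irrefl c)
      · exact hx
    · exact fun hx => ⟨Or.inr hx, hsub hx⟩
  map_rel_iff' := by
    rintro ⟨A, hA⟩ ⟨A', hA'⟩
    constructor
    · intro h
      show A ⊆ A'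
      rw [← succ_recover hA, ← succ_recover hA']
      exact insert_subset_insert h
    · exact fun h => inter_subset_inter_left _ h

end Succ

/-- Transport of copies along an equality. -/
def copiesCongr {a b : Ordinal} (h : a = b) : ↥(Copies a) ≃o ↥(Copies b) := by
  subst h; exact OrderIso.refl _

def prodEmptyIso (X Y : Type*) [Preorder X] [Preorder Y] : X ≃o (Fin 0 → Y) × X where
  toFun x := (fun i => i.elim0, x)
  invFun p := p.2
  left_inv x := rfl
  right_inv p := by
    refine Prod.ext (funext fun i => i.elim0) rfl
  map_rel_iff' := by
    intro x y
    constructor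
    · exact fun h => h.2
    · exact fun h => ⟨fun i => i.elim0, h⟩

lemma lt_add_self_of_lt_opow {b e : Ordinal} (h : b < ω ^ (e + 1)) : b < ω ^ e + b := by
  by_contra hle
  push_neg at hle
  have heq : ω ^ e + b = b := le_antisymm hle ((le_add_self : b ≤ ω ^ e + b))
  have hn : ∀ p : ℕ, ω ^ e * p ≤ b := by
    intro p
    induction p with
    | zero => simp
    | succ p ih =>
      have : (ω : Ordinal) ^ e * (p + 1 : ℕ) = ω ^ e + ω ^ e * p := by
        have h1 : ((p + 1 : ℕ) : Ordinal) = 1 + (p : Ordinal) := by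
          norm_cast
          omega
        rw [h1, mul_add, mul_one]
      rw [this, ← heq]
      exact add_le_add_right ih _
  rw [add_one_eq_succ, opow_succ] at h
  obtain ⟨c', hc', hbc⟩ := (lt_mul_iff_of_isSuccLimit isSuccLimit_omega0).1 h
  obtain ⟨p, rfl⟩ := Ordinal.lt_omega0.1 hc'
  exact absurd (hn p) (not_le.2 hbc)

lemma listSum_lt {l : List Ordinal} {p : Ordinal} (h : ∀ x ∈ l, x < ω ^ p) :
    l.sum < ω ^ p := by
  induction l with
  | nil => simpa using opow_pos p omega0_pos
  | cons x l ih =>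
    rw [List.sum_cons]
    exact principal_add_omega0_opow p (h x List.mem_cons_self)
      (ih fun y hy => h y (List.mem_cons_of_mem x hy))

lemma opow_mul_nat_lt {e : Ordinal} (k : ℕ) : (ω : Ordinal) ^ e * k < ω ^ (e + 1) := by
  rw [add_one_eq_succ, opow_succ]
  exact (mul_lt_mul_iff_right₀ (opow_pos e omega0_pos)).2 (nat_lt_omega0 k)

def oiProdCongr {A B C D : Type*} [Preorder A] [Preorder B] [Preorder C] [Preorder D]
    (f : A ≃o B) (g : C ≃o D) : A × C ≃o B × D where
  toEquiv := f.toEquiv.prodCongr g.toEquiv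
  map_rel_iff' := by
    rintro ⟨x1, x2⟩ ⟨y1, y2⟩
    simp [Prod.le_def, f.map_rel_iff, g.map_rel_iff]

def oiProdAssoc (A B C : Type*) [Preorder A] [Preorder B] [Preorder C] :
    (A × B) × C ≃o A × (B × C) where
  toEquiv := Equiv.prodAssoc A B C
  map_rel_iff' := by
    rintro ⟨⟨x1, x2⟩, x3⟩ ⟨⟨y1, y2⟩, y3⟩
    simp [Prod.le_def, Equiv.prodAssoc, and_assoc]

/-- Splitting off `s` many copies of `ω ^ e` from the front. -/
noncomputable def multIso (e R : Ordinal) (hR : R < ω ^ (e + 1)) :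
    ∀ k : ℕ, ↥(Copies (ω ^ e * k + R)) ≃o (Fin k → ↥(Copies (ω ^ e))) × ↥(Copies R)
  | 0 => (copiesCongr (by simp)).trans (prodEmptyIso _ _)
  | (k+1) => by
    have h1 : (ω : Ordinal) ^ e * (k + 1 : ℕ) + R = ω ^ e + (ω ^ e * k + R) := by
      have h2 : ((k + 1 : ℕ) : Ordinal) = 1 + (k : Ordinal) := by
        norm_cast
        omega
      rw [h2, mul_add, mul_one, add_assoc]
    have hb : (ω : Ordinal) ^ e * k + R < ω ^ e + (ω ^ e * k + R) := by
      refine lt_add_self_of_lt_opow (principal_add_omega0_opow _ (opow_mul_nat_lt k) hR)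
    refine ((copiesCongr h1).trans
      ((splitIso _ _ (fun x hx => Ordinal.add_omega0_opow hx) hb).trans ?_))
    refine (oiProdCongr (OrderIso.refl _) (multIso e R hR k)).trans ?_
    refine (oiProdAssoc _ _ _).symm.trans ?_
    exact oiProdCongr (Fin.insertNthOrderIso
      (fun _ : Fin (k+1) => ↥(Copies (ω ^ e))) 0) (OrderIso.refl _)

def copiesZeroUnique {G : Fin 0 → Type*} [∀ j, Preorder (G j)] :
    ↥(Copies (0 : Ordinal)) ≃o Π j : Fin 0, G j where
  toFun _ := fun j => j.elim0
  invFun _ := ⟨Subtype.val '' Set.range ⇑(OrderIso.refl (↥(Iio (0:Ordinal)))).toOrderEmbedding,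
    ⟨_, rfl⟩⟩
  left_inv A := by
    refine Subtype.ext ?_
    obtain ⟨A, f, rfl⟩ := A
    ext x
    simp only [mem_image, mem_range]
    constructor
    · rintro ⟨u, -, rfl⟩
      exact absurd u.2 (not_lt_of_ge (show (0:Ordinal) ≤ u from zero_le))
    · rintro ⟨u, -, rfl⟩
      exact absurd u.2 (not_lt_of_ge (show (0:Ordinal) ≤ u from zero_le))
  right_inv g := funext fun j => j.elim0
  map_rel_iff' := by
    rintro ⟨A, f, rfl⟩ ⟨A', f', rfl⟩
    constructor
    · rintro - x ⟨u, -, rfl⟩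
      exact absurd u.2 (not_lt_of_ge (show (0:Ordinal) ≤ u from zero_le))
    · rintro - j
      exact j.elim0

noncomputable def listIso : ∀ (N : ℕ) (e : Fin N → Ordinal) (k : Fin N → ℕ),
    (∀ i j : Fin N, i ≤ j → e j ≤ e i) →
    ↥(Copies ((List.ofFn fun j => ω ^ e j * (k j : Ordinal)).sum)) ≃o
      Π j : Fin N, (Fin (k j) → ↥(Copies (ω ^ e j)))
  | 0, e, k, _ => (copiesCongr (by simp)).trans copiesZeroUnique
  | (N+1), e, k, hmono => by
    have hsum : (List.ofFn fun j : Fin (N+1) => ω ^ e j * (k j : Ordinal)).sum =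
        ω ^ e 0 * (k 0 : Ordinal) +
          (List.ofFn fun j : Fin N => ω ^ e j.succ * (k j.succ : Ordinal)).sum := by
      rw [List.ofFn_succ, List.sum_cons]
    have hR : (List.ofFn fun j : Fin N => ω ^ e j.succ * (k j.succ : Ordinal)).sum <
        ω ^ (e 0 + 1) := by
      refine listSum_lt ?_
      intro x hx
      rw [List.mem_ofFn] at hx
      obtain ⟨j, rfl⟩ := hx
      exact (opow_mul_nat_lt _).trans_le (opow_le_opow_right omega0_pos
        (add_le_add_left (hmono 0 j.succ (Fin.zero_le _)) 1))
    refine (copiesCongr hsum).trans ?_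
    refine (multIso (e 0) _ hR (k 0)).trans ?_
    refine (oiProdCongr (OrderIso.refl _)
      (listIso N (fun j => e j.succ) (fun j => k j.succ)
        (fun i j hij => hmono i.succ j.succ (Fin.succ_le_succ_iff.2 hij)))).trans ?_
    have hsa : ((0 : Fin (N+1)).succAbove : Fin N → Fin (N+1)) = Fin.succ :=
      Fin.succAbove_zero
    refine OrderIso.trans ?_ (Fin.insertNthOrderIso
      (fun j : Fin (N+1) => (Fin (k j) → ↥(Copies (ω ^ e j)))) 0)
    rw [hsa]

/-- Stripping a finite tail. -/
def natIso (c : Ordinal) : ∀ m : ℕ, ↥(Copies (c + m)) ≃o ↥(Copies c)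
  | 0 => copiesCongr (by simp)
  | (m+1) => (copiesCongr (show c + ((m+1 : ℕ) : Ordinal) = (c + m) + 1 by
      push_cast
      rw [add_assoc])).trans ((succIso _).trans (natIso c m))

def oiPiCongrLeft {α β : Type*} (F : β → Type*) [∀ b, Preorder (F b)] (σ : α ≃ β) :
    (∀ a, F (σ a)) ≃o ∀ b, F b where
  toEquiv := Equiv.piCongrLeft F σ
  map_rel_iff' := by
    intro f g
    constructor
    · intro h a
      have h2 := Pi.le_def.1 h (σ a)
      rwa [Equiv.piCongrLeft_apply_apply, Equiv.piCongrLeft_apply_apply] at h2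
    · intro h
      rw [Pi.le_def]
      intro b
      obtain ⟨a, rfl⟩ := σ.surjective b
      rw [Equiv.piCongrLeft_apply_apply, Equiv.piCongrLeft_apply_apply]
      exact h a

lemma ofFn_rev {M : Type*} : ∀ (n : ℕ) (g : Fin n → M),
    (List.ofFn g).reverse = List.ofFn (fun j => g j.rev)
  | 0, g => by simp
  | (n+1), g => by
    rw [List.ofFn_succ, List.reverse_cons, ofFn_rev n (fun i => g i.succ),
      List.ofFn_succ' (fun j : Fin (n+1) => g j.rev), List.concat_eq_append]
    congr 1
    · refine congrArg List.ofFn (funext fun j => ?_)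
      rw [Fin.rev_castSucc]
    · rw [Fin.rev_last]

/-- If `α = ω^{δ_n}·s_n + … + ω^{δ_1}·s_1 + m` is an infinite ordinal in Cantor
normal form (indices here run from `0` to `n-1`, with `δ` strictly increasing, so the
sum is taken in decreasing order of exponents), then the poset `⟨P(α), ⊆⟩` is
order-isomorphic to the product `∏_{i} (⟨P(ω^{δ_i}), ⊆⟩)^{s_i}` with the
coordinatewise order. -/
theorem stmt4 (n : ℕ) (hn : 0 < n) (δ : Fin n → Ordinal) (s : Fin n → ℕ) (m : ℕ)
    (hδ0 : 0 < δ ⟨0, hn⟩) (hδ : StrictMono δ) (hs : ∀ i, 0 < s i)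
    (α : Ordinal)
    (hα : α = ((List.finRange n).reverse.map
        (fun i => ω ^ δ i * (s i : Ordinal))).sum + (m : Ordinal))
    (hinf : ω ≤ α) :
    Nonempty (↥(Copies α) ≃o Π i : Fin n, Fin (s i) → ↥(Copies (ω ^ δ i))) := by
  set S : Ordinal := ((List.finRange n).reverse.map
      (fun i => ω ^ δ i * (s i : Ordinal))).sum with hS
  have iso1 : ↥(Copies α) ≃o ↥(Copies S) := (copiesCongr hα).trans (natIso S m)
  have hS2 : S = (List.ofFn fun j : Fin n =>
      ω ^ δ j.rev * ((s j.rev : ℕ) : Ordinal)).sum := by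
    rw [hS, List.map_reverse, ← List.ofFn_eq_map, ofFn_rev]
  have iso2 := listIso n (fun j => δ j.rev) (fun j => s j.rev)
    (fun i j hij => hδ.monotone (Fin.rev_le_rev.2 hij))
  set σ : Equiv.Perm (Fin n) := ⟨Fin.rev, Fin.rev, Fin.rev_rev, Fin.rev_rev⟩ with hσ
  have iso3 := oiPiCongrLeft (fun i : Fin n => Fin (s i) → ↥(Copies (ω ^ δ i))) σ
  exact ⟨iso1.trans ((copiesCongr hS2).trans (iso2.trans iso3))⟩
end Glue
end

section
/- Let k ≥ 1 and let δ'_1 ≥ δ'_2 ≥ … ≥ δ'_k > 0 be ordinals, let γ = ω^{δ'_1} + … + ω^{δ'_k}, and let Λ_1, …, Λ_k ⊆ γ be the consecutive intervals of γ with Λ_j of order type ω^{δ'_j} (so Λ_1 = [0, ω^{δ'_1}), Λ_2 = [ω^{δ'_1}, ω^{δ'_1}+ω^{δ'_2}), etc.). Then a set C ⊆ γ is a copy of γ if and only if, for each j ∈ {1, …, k}, the set C ∩ Λ_j is the image of an order-embedding of the linear order Λ_j into itself; equivalently, P(γ) = { ⋃_{j=1}^{k} C_j : C_j a copy of Λ_j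 for each j }. -/
open Ordinal Set

/-- Copies of the interval `[u, v)` of ordinals: images of order-embeddings of the
suborder `[u, v)` into itself. -/
def ICopies (u v : Ordinal) : Set (Set Ordinal) :=
  {D | ∃ f : Set.Ico u v ↪o Set.Ico u v, D = Subtype.val '' Set.range ⇑f}

universe u

/-- If `Iio c` order-embeds into `Iio d` then `c ≤ d`. -/
theorem iio_le_of_embed {c d : Ordinal.{u}} (f : Set.Iio c ↪o Set.Iio d) : c ≤ d := by
  have g : c.ToType ↪o d.ToType :=
    ((Ordinal.ToType.mk (o := c)).symm.toOrderEmbedding.trans f).trans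
      (Ordinal.ToType.mk (o := d)).toOrderEmbedding
  letI : IsWellOrder c.ToType (· < ·) := isWellOrder_lt
  letI : IsWellOrder d.ToType (· < ·) := isWellOrder_lt
  have : Ordinal.type ((· < ·) : c.ToType → c.ToType → Prop) ≤
      Ordinal.type ((· < ·) : d.ToType → d.ToType → Prop) :=
    Ordinal.type_le_iff'.2 ⟨g.ltEmbedding⟩
  rwa [Ordinal.type_toType, Ordinal.type_toType] at this

/-- The interval `[a, b)` of ordinals is order-isomorphic to `Iio (b - a)`. -/
noncomputable def icoIso (a b : Ordinal) : Set.Iio (b - a) ≃o Set.Ico a b := by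
  refine StrictMono.orderIsoOfSurjective
    (fun s => ⟨a + s.1, le_self_add, Ordinal.lt_sub.mp s.2⟩) ?_ ?_
  · intro s t hst
    exact Subtype.mk_lt_mk.2 (add_lt_add_right (Subtype.coe_lt_coe.2 hst) a)
  · rintro ⟨t, ht1, ht2⟩
    refine ⟨⟨t - a, ?_⟩, ?_⟩
    · show t - a < b - a
      rw [Ordinal.lt_sub, Ordinal.add_sub_cancel_of_le ht1]; exact ht2
    · exact Subtype.ext (Ordinal.add_sub_cancel_of_le ht1)

/-- If `a < ω ^ δ * ω` then `a < ω ^ δ + a`. -/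
theorem lt_opow_add_self {δ a : Ordinal} (ha : a < ω ^ δ * ω) : a < ω ^ δ + a := by
  by_contra h'
  push_neg at h'
  have key : ∀ n : ℕ, ω ^ δ * n + a ≤ a := by
    intro n
    induction n with
    | zero => simp
    | succ n ih =>
      have hc : ((n + 1 : ℕ) : Ordinal) = (n : Ordinal) + 1 := by push_cast; rfl
      rw [hc, mul_add, mul_one, add_assoc]
      exact le_trans (add_le_add_right h' _) ih
  have : ω ^ δ * ω ≤ a := by
    rw [Ordinal.mul_le_iff_of_isSuccLimit Ordinal.isSuccLimit_omega0]
    intro b' hb'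
    obtain ⟨n, rfl⟩ := Ordinal.lt_omega0.mp hb'
    exact le_trans le_self_add (key n)
  exact absurd ha (not_lt.mpr this)

/-- Let `k ≥ 1`, `δ'_1 ≥ … ≥ δ'_k > 0`, `γ = ω^{δ'_1} + … + ω^{δ'_k}` (with partial
sums `σ`), and let `Λ_j = [σ j, σ (j+1))` be the consecutive intervals of `γ` of order
type `ω^{δ'_j}`. Then `C ⊆ γ` is a copy of `γ` iff each `C ∩ Λ_j` is the image of an
order-embedding of `Λ_j` into itself; equivalently, `P(γ)` is the family of unions
`⋃_j C_j` with `C_j` a copy of `Λ_j`. -/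
theorem stmt5 (k : ℕ) (hk : 1 ≤ k) (δ' : ℕ → Ordinal)
    (hpos : ∀ i < k, 0 < δ' i)
    (hanti : ∀ i j, i ≤ j → j < k → δ' j ≤ δ' i)
    (σ : ℕ → Ordinal) (hσ0 : σ 0 = 0) (hσ : ∀ i < k, σ (i + 1) = σ i + ω ^ δ' i)
    (γ : Ordinal) (hγ : γ = σ k) :
    (∀ C ⊆ Set.Iio γ,
      (C ∈ Copies γ ↔ ∀ j < k,
        C ∩ Set.Ico (σ j) (σ (j + 1)) ∈ ICopies (σ j) (σ (j + 1)))) ∧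
    Copies γ = {A | ∃ C : ℕ → Set Ordinal,
      (∀ j < k, C j ∈ ICopies (σ j) (σ (j + 1))) ∧
      A = ⋃ j ∈ Finset.range k, C j} := by
  -- monotonicity of σ
  have hmono : ∀ j ≤ k, ∀ i ≤ j, σ i ≤ σ j := by
    intro j
    induction j with
    | zero => intro _ i hi; interval_cases i; exact le_rfl
    | succ j ih =>
      intro hj i hi
      rcases Nat.lt_or_ge i (j + 1) with h | h
      · have hij : i ≤ j := Nat.lt_succ_iff.mp h
        calc σ i ≤ σ j := ih (Nat.le_of_succ_le hj) i hij
          _ ≤ σ (j + 1) := by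
            rw [hσ j hj]; exact le_self_add
      · have : i = j + 1 := le_antisymm hi h
        rw [this]
  have hσγ : ∀ j ≤ k, σ j ≤ γ := fun j hj => hγ ▸ hmono k le_rfl j hj
  -- covering
  have hcov : ∀ j ≤ k, ∀ x, x < σ j → ∃ i, i < j ∧ σ i ≤ x ∧ x < σ (i + 1) := by
    intro j
    induction j with
    | zero => intro _ x hx; rw [hσ0] at hx; exact absurd hx (not_lt.mpr (zero_le (a := x)))
    | succ j ih =>
      intro hj x hx
      rcases lt_or_ge x (σ j) with h | h
      · obtain ⟨i, h1, h2, h3⟩ := ih (Nat.le_of_succ_le hj) x h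
        exact ⟨i, Nat.lt_succ_of_lt h1, h2, h3⟩
      · exact ⟨j, Nat.lt_succ_self j, h, hx⟩
  -- remainder recursion
  have hR : ∀ i < k, γ - σ i = ω ^ δ' i + (γ - σ (i + 1)) := by
    intro i hi
    have h1 : σ i + (γ - σ i) = γ := Ordinal.add_sub_cancel_of_le (hσγ i hi.le)
    have h2 : σ (i + 1) + (γ - σ (i + 1)) = γ := Ordinal.add_sub_cancel_of_le (hσγ (i + 1) hi)
    nth_rewrite 1 [hσ i hi] at h2
    rw [add_assoc] at h2
    exact add_left_cancel (h1.trans h2.symm)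
  -- bound on remainders
  have hbd : ∀ i < k, ∀ t m, m + t = k → i ≤ m → γ - σ m < ω ^ δ' i * ω := by
    intro i hik t
    induction t with
    | zero =>
      intro m hm _
      have hmk : m = k := by omega
      rw [hmk, ← hγ, Ordinal.sub_self]
      exact mul_pos (opow_pos _ omega0_pos) omega0_pos
    | succ t ih =>
      intro m hm him
      have hmk : m < k := by omega
      have h1 : γ - σ (m + 1) < ω ^ δ' i * ω := ih (m + 1) (by omega) (by omega)
      obtain ⟨c', hc', hlt⟩ := (Ordinal.lt_mul_iff_of_isSuccLimit Ordinal.isSuccLimit_omega0).mp h1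
      have h2 : ω ^ δ' m ≤ ω ^ δ' i := opow_le_opow_right omega0_pos (hanti i m him hmk)
      have h3 : 1 + c' ≤ ω := by
        obtain ⟨n, rfl⟩ := Ordinal.lt_omega0.mp hc'
        have : (1 : Ordinal) + n = ((1 + n : ℕ) : Ordinal) := by push_cast; rfl
        rw [this]
        exact (nat_lt_omega0 _).le
      calc γ - σ m = ω ^ δ' m + (γ - σ (m + 1)) := hR m hmk
        _ ≤ ω ^ δ' i + (γ - σ (m + 1)) := add_le_add_left h2 _
        _ < ω ^ δ' i + ω ^ δ' i * c' := add_lt_add_right hlt _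
        _ = ω ^ δ' i * (1 + c') := by rw [mul_add, mul_one]
        _ ≤ ω ^ δ' i * ω := mul_le_mul_right h3 _
  -- strict decrease of remainders
  have hstep : ∀ m < k, γ - σ (m + 1) < γ - σ m := by
    intro m hm
    rw [hR m hm]
    exact lt_opow_add_self (hbd m hm (k - (m + 1)) (m + 1) (by omega) (by omega))
  have hdec : ∀ i j, i < j → j ≤ k → γ - σ j < γ - σ i := by
    intro i j
    induction j with
    | zero => intro h _; exact absurd h (Nat.not_lt_zero i)
    | succ j ih =>
      intro hij hjk
      rcases Nat.lt_or_ge i j with h | h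
      · exact lt_trans (hstep j hjk) (ih h (by omega))
      · have : i = j := by omega
        rw [← this]
        rw [← this] at hjk
        exact hstep i hjk
  -- remainder of a point inside an interval
  have hsub : ∀ i < k, ∀ x, σ i ≤ x → x < σ (i + 1) → γ - x = γ - σ i := by
    intro i hi x h1 h2
    have hx : σ i + (x - σ i) = x := Ordinal.add_sub_cancel_of_le h1
    have hr : x - σ i < ω ^ δ' i := by
      by_contra h
      push_neg at h
      have h' := add_le_add_right h (σ i)
      rw [hx, ← hσ i hi] at h'
      exact absurd h2 (not_lt.mpr h')
    have key : x + (γ - σ i) = γ := by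
      conv_lhs => rw [← hx]
      rw [hR i hi, add_assoc, ← add_assoc (x - σ i), Ordinal.add_omega0_opow hr, ← hR i hi]
      exact Ordinal.add_sub_cancel_of_le (hσγ i hi.le)
    exact Ordinal.sub_eq_of_add_eq key
  -- uniqueness of interval index
  have huniq : ∀ (x : Ordinal) (i j : ℕ), i < k → j < k → σ i ≤ x → x < σ (i + 1) →
      σ j ≤ x → x < σ (j + 1) → i = j := by
    intro x i j hik hjk h1 h2 h3 h4
    by_contra hne
    rcases Nat.lt_or_ge i j with h | h
    · exact absurd (lt_of_lt_of_le h2 (hmono j hjk.le (i + 1) h)) (not_lt.mpr h3)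
    · have h' : j < i := by omega
      exact absurd (lt_of_lt_of_le h4 (hmono i hik.le (j + 1) h')) (not_lt.mpr h1)
  -- covering decomposition of any subset of Iio γ
  have hcover : ∀ C ⊆ Set.Iio γ, C = ⋃ j ∈ Finset.range k, C ∩ Set.Ico (σ j) (σ (j + 1)) := by
    intro C hC
    ext y
    simp only [Set.mem_iUnion, Finset.mem_range, Set.mem_inter_iff, Set.mem_Ico, exists_prop]
    constructor
    · intro hy
      obtain ⟨i, hik, h1, h2⟩ := hcov k le_rfl y (hγ ▸ hC hy)
      exact ⟨i, hik, hy, h1, h2⟩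
    · rintro ⟨i, _, hy, _⟩; exact hy
  -- Lemma A: embeddings of Iio γ preserve the initial segments σ j
  have lemA : ∀ (f : Set.Iio γ ↪o Set.Iio γ), ∀ j ≤ k, ∀ x : Set.Iio γ,
      x.1 < σ j → ((f x : Set.Iio γ) : Ordinal) < σ j := by
    intro f j hj x hx
    by_contra hcon
    push_neg at hcon
    obtain ⟨i, hij, hi1, hi2⟩ := hcov j hj x.1 hx
    have hik : i < k := lt_of_lt_of_le hij hj
    have hmem : ∀ t : Set.Ico x.1 γ,
        ((f ⟨t.1, t.2.2⟩ : Set.Iio γ) : Ordinal) ∈ Set.Ico (σ j) γ := by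
      intro t
      refine ⟨le_trans hcon ?_, (f ⟨t.1, t.2.2⟩).2⟩
      have hxt : x ≤ (⟨t.1, t.2.2⟩ : Set.Iio γ) := t.2.1
      exact Subtype.coe_le_coe.2 (f.monotone hxt)
    let E : Set.Ico x.1 γ ↪o Set.Ico (σ j) γ :=
      OrderEmbedding.ofStrictMono (fun t => ⟨_, hmem t⟩) (by
        intro t u htu
        refine Subtype.mk_lt_mk.2 (Subtype.coe_lt_coe.2 (f.strictMono ?_))
        exact Subtype.mk_lt_mk.2 (Subtype.coe_lt_coe.2 htu))
    have hle : γ - x.1 ≤ γ - σ j :=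
      iio_le_of_embed (((icoIso x.1 γ).toOrderEmbedding.trans E).trans
        (icoIso (σ j) γ).symm.toOrderEmbedding)
    rw [hsub i hik x.1 hi1 hi2] at hle
    exact absurd hle (not_le.mpr (hdec i j hij hj))
  -- splitting a copy of γ into interval copies
  have split : ∀ (f : Set.Iio γ ↪o Set.Iio γ), ∀ j < k,
      (Subtype.val '' Set.range ⇑f) ∩ Set.Ico (σ j) (σ (j + 1)) ∈
        ICopies (σ j) (σ (j + 1)) := by
    intro f j hjk
    have hj1 : j + 1 ≤ k := hjk
    have hle1 : σ (j + 1) ≤ γ := hσγ (j + 1) hj1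
    have hself : ∀ y : Set.Iio γ, y.1 ≤ ((f y : Set.Iio γ) : Ordinal) :=
      fun y => Subtype.coe_le_coe.2 f.strictMono.le_apply
    have hmem : ∀ t : Set.Ico (σ j) (σ (j + 1)),
        ((f ⟨t.1, lt_of_lt_of_le t.2.2 hle1⟩ : Set.Iio γ) : Ordinal) ∈
          Set.Ico (σ j) (σ (j + 1)) := by
      intro t
      exact ⟨le_trans t.2.1 (hself _), lemA f (j + 1) hj1 _ t.2.2⟩
    refine ⟨OrderEmbedding.ofStrictMono (fun t => ⟨_, hmem t⟩) (by
      intro t u htu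
      refine Subtype.mk_lt_mk.2 (Subtype.coe_lt_coe.2 (f.strictMono ?_))
      exact Subtype.mk_lt_mk.2 (Subtype.coe_lt_coe.2 htu)), ?_⟩
    apply Set.Subset.antisymm
    · rintro y ⟨⟨w, ⟨u, rfl⟩, rfl⟩, hy2⟩
      have hu : u.1 ∈ Set.Ico (σ j) (σ (j + 1)) := by
        constructor
        · by_contra h
          push_neg at h
          exact absurd (lemA f j (le_of_lt hjk) u h) (not_lt.mpr hy2.1)
        · exact lt_of_le_of_lt (hself u) hy2.2
      refine ⟨_, ⟨⟨u.1, hu⟩, rfl⟩, ?_⟩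
      show ((f ⟨u.1, _⟩ : Set.Iio γ) : Ordinal) = _
      exact congrArg (fun z => ((f z : Set.Iio γ) : Ordinal)) (Subtype.ext rfl)
    · rintro y ⟨w, ⟨t, rfl⟩, rfl⟩
      exact ⟨⟨_, ⟨_, rfl⟩, rfl⟩, hmem t⟩
  -- gluing interval copies into a copy of γ
  have glue : ∀ C : ℕ → Set Ordinal, (∀ j < k, C j ∈ ICopies (σ j) (σ (j + 1))) →
      (⋃ j ∈ Finset.range k, C j) ∈ Copies γ := by
    intro C hC
    have hgex : ∀ j, ∃ g : Set.Ico (σ j) (σ (j + 1)) ↪o Set.Ico (σ j) (σ (j + 1)),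
        j < k → C j = Subtype.val '' Set.range ⇑g := by
      intro j
      by_cases h : j < k
      · obtain ⟨g, hg⟩ := hC j h
        exact ⟨g, fun _ => hg⟩
      · exact ⟨(OrderIso.refl _).toOrderEmbedding, fun h' => absurd h' h⟩
    choose g hg using hgex
    have hcovx : ∀ x : Set.Iio γ, ∃ i, i < k ∧ σ i ≤ x.1 ∧ x.1 < σ (i + 1) :=
      fun x => hcov k le_rfl x.1 (hγ ▸ x.2)
    let I : Set.Iio γ → ℕ := fun x => Classical.choose (hcovx x)
    have hI : ∀ x, I x < k ∧ σ (I x) ≤ x.1 ∧ x.1 < σ (I x + 1) :=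
      fun x => Classical.choose_spec (hcovx x)
    let G : ℕ → Ordinal → Ordinal := fun j y =>
      if h : y ∈ Set.Ico (σ j) (σ (j + 1)) then ((g j ⟨y, h⟩ : Set.Ico _ _) : Ordinal) else y
    have hG1 : ∀ j y (h : y ∈ Set.Ico (σ j) (σ (j + 1))),
        G j y = ((g j ⟨y, h⟩ : Set.Ico _ _) : Ordinal) := fun j y h => dif_pos h
    have hGmem : ∀ j y, y ∈ Set.Ico (σ j) (σ (j + 1)) →
        G j y ∈ Set.Ico (σ j) (σ (j + 1)) := by
      intro j y h
      rw [hG1 j y h]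
      exact (g j ⟨y, h⟩).2
    have hGmono : ∀ j y z (hy : y ∈ Set.Ico (σ j) (σ (j + 1)))
        (hz : z ∈ Set.Ico (σ j) (σ (j + 1))), y < z → G j y < G j z := by
      intro j y z hy hz hyz
      rw [hG1 j y hy, hG1 j z hz]
      exact Subtype.coe_lt_coe.2 ((g j).strictMono (Subtype.mk_lt_mk.2 hyz))
    let F : Set.Iio γ → Set.Iio γ := fun x =>
      ⟨G (I x) x.1, lt_of_lt_of_le (hGmem (I x) x.1 (hI x).2).2 (hσγ (I x + 1) (hI x).1)⟩
    have hFmono : StrictMono F := by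
      intro x y hxy
      have hxy' : x.1 < y.1 := Subtype.coe_lt_coe.2 hxy
      have hIle : I x ≤ I y := by
        by_contra h
        push_neg at h
        have h1 : y.1 < σ (I x) := lt_of_lt_of_le (hI y).2.2 (hmono (I x) (hI x).1.le (I y + 1) h)
        exact absurd hxy' (not_lt.mpr (lt_of_lt_of_le h1 (hI x).2.1).le)
      rcases Nat.lt_or_ge (I x) (I y) with h | h
      · refine Subtype.mk_lt_mk.2 (lt_of_lt_of_le (hGmem (I x) x.1 (hI x).2).2 ?_)
        exact le_trans (hmono (I y) (hI y).1.le (I x + 1) h) (hGmem (I y) y.1 (hI y).2).1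
      · have he : I x = I y := Nat.le_antisymm hIle h
        refine Subtype.mk_lt_mk.2 ?_
        show G (I x) x.1 < G (I y) y.1
        rw [he]
        exact hGmono (I y) x.1 y.1 (he ▸ (hI x).2) (hI y).2 hxy'
    refine ⟨OrderEmbedding.ofStrictMono F hFmono, ?_⟩
    apply Set.Subset.antisymm
    · intro y hy
      simp only [Set.mem_iUnion, Finset.mem_range, exists_prop] at hy
      obtain ⟨j, hj, hyj⟩ := hy
      rw [hg j hj] at hyj
      obtain ⟨w, ⟨t, rfl⟩, rfl⟩ := hyj
      have hxlt : t.1 < γ := lt_of_lt_of_le t.2.2 (hσγ (j + 1) hj)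
      set x : Set.Iio γ := ⟨t.1, hxlt⟩ with hxdef
      have hIx : I x = j := huniq t.1 (I x) j (hI x).1 hj (hI x).2.1 (hI x).2.2 t.2.1 t.2.2
      refine ⟨F x, ⟨x, rfl⟩, ?_⟩
      show G (I x) x.1 = ((g j t : Set.Ico _ _) : Ordinal)
      rw [hIx]
      have ht' : t.1 ∈ Set.Ico (σ j) (σ (j + 1)) := ⟨t.2.1, t.2.2⟩
      rw [hG1 j t.1 ht']
    · rintro y ⟨w, ⟨x, rfl⟩, rfl⟩
      refine Set.mem_biUnion (Finset.mem_range.mpr (hI x).1) ?_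
      rw [hg (I x) (hI x).1]
      refine ⟨g (I x) ⟨x.1, (hI x).2⟩, ⟨_, rfl⟩, ?_⟩
      exact (hG1 (I x) x.1 (hI x).2).symm
  constructor
  · intro Cset hCsub
    constructor
    · intro hCmem j hj
      obtain ⟨f, rfl⟩ := hCmem
      exact split f j hj
    · intro h
      have h2 := glue (fun j => Cset ∩ Set.Ico (σ j) (σ (j + 1))) h
      rwa [← hcover Cset hCsub] at h2
  · ext A
    simp only [Set.mem_setOf_eq]
    constructor
    · intro hA
      obtain ⟨f, rfl⟩ := hA
      have hsub' : (Subtype.val '' Set.range ⇑f) ⊆ Set.Iio γ := by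
        rintro y ⟨w, _, rfl⟩; exact w.2
      exact ⟨fun j => (Subtype.val '' Set.range ⇑f) ∩ Set.Ico (σ j) (σ (j + 1)),
        fun j hj => split f j hj, hcover _ hsub'⟩
    · rintro ⟨C, hC, rfl⟩
      exact glue C hC
end

section
/- Let δ > 0 be an ordinal, let I be a linear order with |I| < cf(ω^δ), and let L = Σ_{i∈I} L_i be the lexicographic sum of linear orders L_i over I. If ω^δ order-embeds into L, then ω^δ order-embeds into L_i for some i ∈ I. -/
open Ordinal Set Cardinal

universe u

/-- Let `δ > 0`, let `I` be a linear order with `|I| < cf(ω^δ)`, and let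
`L = Σ_{i∈I} L_i` be a lexicographic sum of linear orders. If `ω^δ` order-embeds
into `L`, then it order-embeds into some summand `L_i`. -/
theorem stmt9 (δ : Ordinal.{u}) (hδ : 0 < δ) (I : Type u) [LinearOrder I]
    (L : I → Type u) [∀ i, LinearOrder (L i)]
    (hI : Cardinal.mk I < (ω ^ δ).cof)
    (h : Nonempty (↥(Set.Iio (ω ^ δ)) ↪o (Σₗ i : I, L i))) :
    ∃ i : I, Nonempty (↥(Set.Iio (ω ^ δ)) ↪o L i) := by
  obtain ⟨f⟩ := h
  have hcpos : (0 : Ordinal) < ω ^ δ := opow_pos δ omega0_pos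
  -- first component is monotone
  have gmono : ∀ {x y : ↥(Set.Iio (ω ^ δ))}, x ≤ y → (f x).1 ≤ (f y).1 := by
    intro x y hxy
    rcases Sigma.Lex.le_def.1 (f.monotone hxy) with h1 | ⟨h1, _⟩
    · exact h1.le
    · exact h1.le
  -- some fiber is cofinal
  have key : ∃ i : I, ∀ a : ↥(Set.Iio (ω ^ δ)), ∃ x, a ≤ x ∧ (f x).1 = i := by
    by_contra hcon
    push_neg at hcon
    choose b hb using hcon
    have hs : (⨆ i, (b i : Ordinal)) < ω ^ δ :=
      Ordinal.iSup_lt_ord hI fun i => (b i).2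
    set x : ↥(Set.Iio (ω ^ δ)) := ⟨_, hs⟩
    exact hb (f x).1 x (Ordinal.le_iSup _ _) rfl
  obtain ⟨i, hi⟩ := key
  obtain ⟨x₀, -, hx₀⟩ := hi ⟨0, hcpos⟩
  have hfiber : ∀ x, x₀ ≤ x → (f x).1 = i := by
    intro x hx
    obtain ⟨z, hz, hzi⟩ := hi x
    exact le_antisymm (hzi ▸ gmono hz) (hx₀ ▸ gmono hx)
  -- casting lemma
  have hcast : ∀ (p q : Σₗ j : I, L j) (hp : p.1 = i) (hq : q.1 = i),
      p < q → hp ▸ p.2 < hq ▸ q.2 := by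
    rintro ⟨pi, pa⟩ ⟨qi, qa⟩ hp hq hpq
    dsimp at hp hq
    subst hp; subst hq
    rcases Sigma.Lex.lt_def.1 hpq with h1 | ⟨h1, h2⟩
    · exact absurd h1 (lt_irrefl _)
    · simpa using h2
  -- build the embedding
  have hadd : ∀ a : ↥(Set.Iio (ω ^ δ)), (x₀ : Ordinal) + a < ω ^ δ :=
    fun a => (principal_add_omega0_opow δ) x₀.2 a.2
  have hle : ∀ a : ↥(Set.Iio (ω ^ δ)), x₀ ≤ (⟨(x₀ : Ordinal) + a, hadd a⟩ : ↥(Set.Iio (ω ^ δ))) :=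
    fun a => Subtype.mk_le_mk.2 le_self_add
  refine ⟨i, ⟨OrderEmbedding.ofStrictMono
    (fun a => (hfiber _ (hle a)) ▸ (f ⟨(x₀ : Ordinal) + a, hadd a⟩).2) ?_⟩⟩
  intro a b hab
  refine hcast _ _ _ _ (f.strictMono ?_)
  exact Subtype.mk_lt_mk.2 (by exact_mod_cast add_lt_add_right (Subtype.coe_lt_coe.2 hab) _)
end
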